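/- (Lemma 1, second part.) Let 0 < ρ < 1 and ε = ε_Λ(√(ρ(1−ρ)/(1+ρ))). If ε < 1/2 and the second moment of the discrete Gaussian satisfies ∑_{a∈Λ} D_{Λ,√ρ}(a)·a² ≥ ρ(1 − 2ε), then the differential entropy of the mixture density satisfies −∫_{ℝ²} f_{X̄,Ȳ} ln f_{X̄,Ȳ} dx dy ≥ ln(2π√(1−ρ²)) + 1 − 5ε; equivalently, the entropy gap h(f_{X,Y}) − h(f_{X̄,Ȳ}) (which equals the gap I(X,Y;W) − I(X̄,Ȳ;W̄) between the Wyner common information of the Gaussian pair and the mutual information of the discretized model) is at most 5ε nats. -/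

import Mathlib

open Real

/-- The centered Gaussian density with standard deviation `σ`. -/
noncomputable def gpdf (σ x : ℝ) : ℝ :=
  (1 / (Real.sqrt (2 * Real.pi) * σ)) * Real.exp (-(x ^ 2) / (2 * σ ^ 2))

/-- The discrete Gaussian distribution over the lattice `Λ = bℤ` with parameter `σ`,
evaluated at the lattice point `b * k`. -/
noncomputable def dgauss (b σ : ℝ) (k : ℤ) : ℝ :=
  gpdf σ (b * k) / ∑' j : ℤ, gpdf σ (b * j)

/-- The flatness factor of the lattice `Λ = bℤ` at parameter `σ`. -/
noncomputable def flatness (b σ : ℝ) : ℝ :=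
  ⨆ x : ℝ, |b * (∑' k : ℤ, gpdf σ (x - b * k)) - 1|

/-- The bivariate Gaussian density with unit variances and correlation `ρ`. -/
noncomputable def fXY (ρ x y : ℝ) : ℝ :=
  (1 / (2 * Real.pi * Real.sqrt (1 - ρ ^ 2))) *
    Real.exp (-(x ^ 2 + y ^ 2 - 2 * ρ * x * y) / (2 * (1 - ρ ^ 2)))

/-- The density of `(W̄ + √(1-ρ)N₁, W̄ + √(1-ρ)N₂)` where `W̄ ~ D_{Λ,√ρ}`, `Λ = bℤ`. -/
noncomputable def fXbarYbar (ρ b x y : ℝ) : ℝ :=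
  ∑' k : ℤ, dgauss b (Real.sqrt ρ) k * gpdf (Real.sqrt (1 - ρ)) (x - b * k) *
    gpdf (Real.sqrt (1 - ρ)) (y - b * k)


section helpers
open MeasureTheory

section basics
variable {σ b x : ℝ}

lemma sqrt_two_pi_pos : 0 < Real.sqrt (2 * Real.pi) :=
  Real.sqrt_pos.2 (by positivity)

lemma gpdf_pos (hσ : 0 < σ) (x : ℝ) : 0 < gpdf σ x := by
  unfold gpdf
  have := sqrt_two_pi_pos
  positivity

lemma gpdf_nonneg (hσ : 0 < σ) (x : ℝ) : 0 ≤ gpdf σ x := (gpdf_pos hσ x).le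

lemma gpdf_even (σ x : ℝ) : gpdf σ (-x) = gpdf σ x := by simp [gpdf]

lemma gpdf_le (hσ : 0 < σ) (x : ℝ) : gpdf σ x ≤ 1 / (Real.sqrt (2 * Real.pi) * σ) := by
  have h1 : Real.exp (-(x ^ 2) / (2 * σ ^ 2)) ≤ 1 := by
    rw [Real.exp_le_one_iff]
    have : (0:ℝ) < 2 * σ ^ 2 := by positivity
    apply div_nonpos_of_nonpos_of_nonneg (by nlinarith [sq_nonneg x]) this.le
  have h2 : (0:ℝ) < 1 / (Real.sqrt (2 * Real.pi) * σ) := by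
    have := sqrt_two_pi_pos; positivity
  calc gpdf σ x ≤ (1 / (Real.sqrt (2 * Real.pi) * σ)) * 1 := by
        exact mul_le_mul_of_nonneg_left h1 h2.le
    _ = _ := mul_one _

lemma continuous_gpdf (σ : ℝ) : Continuous (gpdf σ) := by
  unfold gpdf
  fun_prop

lemma measurable_gpdf (σ : ℝ) : Measurable (gpdf σ) := (continuous_gpdf σ).measurable

lemma gpdf_eq (σ x : ℝ) :
    gpdf σ x = (1 / (Real.sqrt (2 * Real.pi) * σ)) * Real.exp (-(1/(2*σ^2)) * x ^ 2) := by
  unfold gpdf; ring_nf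

end basics

section summability

lemma summable_exp_neg_int_sq {c : ℝ} (hc : 0 < c) :
    Summable fun k : ℤ => Real.exp (-(c * (k:ℝ) ^ 2)) := by
  have key : Summable fun n : ℕ => Real.exp (-(c * (n:ℝ) ^ 2)) := by
    apply Summable.of_nonneg_of_le (fun n => (Real.exp_pos _).le)
      (f := fun n : ℕ => Real.exp (-c) ^ n)
    · intro n
      rw [← Real.exp_nat_mul]
      apply Real.exp_le_exp.2
      have : (n:ℝ) ≤ (n:ℝ) ^ 2 := by
        rcases Nat.eq_zero_or_pos n with h | h
        · simp [h]
        · have h1 : (1:ℝ) ≤ (n:ℝ) := by exact_mod_cast h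
          nlinarith
      nlinarith
    · exact summable_geometric_of_lt_one (Real.exp_pos _).le
        (Real.exp_lt_one_iff.2 (by linarith))
  apply Summable.of_nat_of_neg
  · exact key
  · simpa using key

lemma sq_half_sub_le (u v : ℝ) : v ^ 2 / 2 - u ^ 2 ≤ (u - v) ^ 2 := by
  nlinarith [sq_nonneg (2*u - v)]

lemma summable_gpdf {σ b : ℝ} (hσ : 0 < σ) (hb : 0 < b) (x : ℝ) :
    Summable fun k : ℤ => gpdf σ (x - b * k) := by
  have hC : (0:ℝ) < 1 / (Real.sqrt (2 * Real.pi) * σ) := by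
    have := sqrt_two_pi_pos; positivity
  apply Summable.of_nonneg_of_le (fun k => gpdf_nonneg hσ _)
    (f := fun k : ℤ => ((1 / (Real.sqrt (2 * Real.pi) * σ)) * Real.exp (x^2/(2*σ^2))) *
      Real.exp (-((b^2/(4*σ^2)) * (k:ℝ)^2)))
  · intro k
    unfold gpdf
    rw [mul_assoc, ← Real.exp_add]
    apply mul_le_mul_of_nonneg_left _ hC.le
    apply Real.exp_le_exp.2
    have h1 : (b*(k:ℝ)) ^ 2 / 2 - x ^ 2 ≤ (x - b*k) ^ 2 := sq_half_sub_le x (b*k)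
    have h2 : (0:ℝ) < 2 * σ ^ 2 := by positivity
    have hσ2 : σ ^ 2 ≠ 0 := by positivity
    have hnum : 0 ≤ (x^2 + (x - b*(k:ℝ))^2 - (b*(k:ℝ))^2/2) / (2*σ^2) :=
      div_nonneg (by nlinarith [h1]) h2.le
    have hid : x^2/(2*σ^2) + (-(b^2/(4*σ^2) * (k:ℝ)^2)) - (-((x - b*(k:ℝ))^2)/(2*σ^2))
        = (x^2 + (x - b*(k:ℝ))^2 - (b*(k:ℝ))^2/2)/(2*σ^2) := by
      field_simp
      ring
    linarith [hid ▸ hnum]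
  · apply Summable.mul_left
    exact summable_exp_neg_int_sq (by positivity)

end summability

section theta
variable {σ b : ℝ}

/-- uniform bound for the theta function -/
lemma theta_le (hσ : 0 < σ) (hb : 0 < b) :
    ∃ M : ℝ, ∀ x : ℝ, (∑' k : ℤ, gpdf σ (x - b * k)) ≤ M := by
  classical
  set C : ℝ := 1 / (Real.sqrt (2 * Real.pi) * σ) with hC
  have hCpos : 0 < C := by have := sqrt_two_pi_pos; positivity
  set S : ℝ := ∑' j : ℤ, Real.exp (-(b^2/(4*σ^2) * (j:ℝ)^2)) with hS
  refine ⟨C * Real.exp (b^2/(8*σ^2)) * S, fun x => ?_⟩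
  have hm : ∀ x : ℝ, (∑' k : ℤ, gpdf σ (x - b * k)) = ∑' j : ℤ, gpdf σ ((x - b * round (x/b)) - b * j) := by
    intro x
    rw [← (Equiv.addRight (round (x/b))).tsum_eq (fun k : ℤ => gpdf σ (x - b * k))]
    congr 1; ext j
    simp only [Equiv.coe_addRight]
    congr 1
    push_cast
    ring
  rw [hm x]
  set r : ℝ := x - b * round (x/b) with hr
  have hrb : |r| ≤ b / 2 := by
    have h := abs_sub_round (x/b)
    rw [hr]
    have : x - b * round (x/b) = b * (x/b - round (x/b)) := by field_simp
    rw [this, abs_mul, abs_of_pos hb]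
    calc b * |x/b - round (x/b)| ≤ b * (1/2) := by
          exact mul_le_mul_of_nonneg_left h hb.le
      _ = b / 2 := by ring
  have hterm : ∀ j : ℤ, gpdf σ (r - b * j) ≤
      (C * Real.exp (b^2/(8*σ^2))) * Real.exp (-(b^2/(4*σ^2) * (j:ℝ)^2)) := by
    intro j
    unfold gpdf
    rw [mul_assoc, ← Real.exp_add]
    apply mul_le_mul_of_nonneg_left _ hCpos.le
    apply Real.exp_le_exp.2
    have h1 : (b*(j:ℝ)) ^ 2 / 2 - r ^ 2 ≤ (r - b*j) ^ 2 := sq_half_sub_le r (b*j)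
    have h2 : (0:ℝ) < 2 * σ ^ 2 := by positivity
    have hr2 : r^2 ≤ b^2/4 := by
      have := abs_le.1 hrb
      nlinarith [this.1, this.2]
    have hnum : 0 ≤ (b^2/4 + (r - b*(j:ℝ))^2 - (b*(j:ℝ))^2/2) / (2*σ^2) :=
      div_nonneg (by nlinarith) h2.le
    have hid : b^2/(8*σ^2) + (-(b^2/(4*σ^2) * (j:ℝ)^2)) - (-((r - b*(j:ℝ))^2)/(2*σ^2))
        = (b^2/4 + (r - b*(j:ℝ))^2 - (b*(j:ℝ))^2/2)/(2*σ^2) := by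
      field_simp
      ring
    linarith [hid ▸ hnum]
  calc (∑' j : ℤ, gpdf σ (r - b * j))
      ≤ ∑' j : ℤ, (C * Real.exp (b^2/(8*σ^2))) * Real.exp (-(b^2/(4*σ^2) * (j:ℝ)^2)) := by
        apply Summable.tsum_le_tsum hterm (summable_gpdf hσ hb r)
        exact (summable_exp_neg_int_sq (by positivity)).mul_left _
    _ = C * Real.exp (b^2/(8*σ^2)) * S := by
        rw [tsum_mul_left]

lemma flatness_nonneg (b σ : ℝ) : 0 ≤ flatness b σ :=
  Real.iSup_nonneg (fun x => abs_nonneg _)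

lemma abs_theta_le_flatness (hσ : 0 < σ) (hb : 0 < b) (x : ℝ) :
    |b * (∑' k : ℤ, gpdf σ (x - b * k)) - 1| ≤ flatness b σ := by
  obtain ⟨M, hM⟩ := theta_le hσ hb
  apply le_ciSup (f := fun x : ℝ => |b * (∑' k : ℤ, gpdf σ (x - b * k)) - 1|)
  refine ⟨b * M + 1, ?_⟩
  rintro y ⟨x, rfl⟩
  have h1 : 0 ≤ ∑' k : ℤ, gpdf σ (x - b * k) := tsum_nonneg (fun k => gpdf_nonneg hσ _)
  have h2 := hM x
  rw [abs_sub_le_iff]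
  constructor
  · nlinarith
  · nlinarith

lemma theta_bounds (hσ : 0 < σ) (hb : 0 < b) (x : ℝ) :
    1 - flatness b σ ≤ b * (∑' k : ℤ, gpdf σ (x - b * k)) ∧
    b * (∑' k : ℤ, gpdf σ (x - b * k)) ≤ 1 + flatness b σ := by
  have h := abs_le.1 (abs_theta_le_flatness hσ hb x)
  constructor <;> linarith [h.1, h.2]

lemma measurable_theta (b : ℝ) (hσ : 0 < σ) :
    Measurable (fun u : ℝ => ∑' k : ℤ, gpdf σ (u - b * k)) := by
  · have heq : (fun u : ℝ => ∑' k : ℤ, gpdf σ (u - b * k)) =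
        fun u => (∑' k : ℤ, ENNReal.ofReal (gpdf σ (u - b * k))).toReal := by
      ext u
      by_cases hsum : Summable fun k : ℤ => gpdf σ (u - b * k)
      · rw [← ENNReal.ofReal_tsum_of_nonneg (fun k => gpdf_nonneg hσ _) hsum,
          ENNReal.toReal_ofReal (tsum_nonneg (fun k => gpdf_nonneg hσ _))]
      · rw [tsum_eq_zero_of_not_summable hsum]
        have : ∑' k : ℤ, ENNReal.ofReal (gpdf σ (u - b * k)) = ⊤ := by
          by_contra h
          apply hsum
          have := ENNReal.summable_toReal h
          apply Summable.congr this
          intro k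
          rw [ENNReal.toReal_ofReal (gpdf_nonneg hσ _)]
        rw [this]
        simp
    rw [heq]
    apply Measurable.ennreal_toReal
    apply Measurable.ennreal_tsum
    intro k
    exact (measurable_gpdf σ).comp (measurable_id.sub measurable_const) |>.ennreal_ofReal
end theta

section oneDim
variable {σ : ℝ}

lemma integrable_sq_mul_exp_neg_mul_sq {c : ℝ} (hc : 0 < c) :
    Integrable (fun x : ℝ => x ^ 2 * Real.exp (-c * x ^ 2)) := by
  apply Integrable.mono' ((integrable_exp_neg_mul_sq (by positivity : (0:ℝ) < c/2)).const_mul (2/c))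
  · exact ((continuous_pow 2).mul (Real.continuous_exp.comp (by fun_prop))).aestronglyMeasurable
  · filter_upwards with x
    rw [Real.norm_eq_abs, abs_mul, abs_of_nonneg (sq_nonneg x), abs_of_nonneg (Real.exp_pos _).le]
    have h1 : x ^ 2 ≤ (2/c) * Real.exp ((c/2) * x ^ 2) := by
      have := Real.add_one_le_exp ((c/2) * x ^ 2)
      have h2 : (c/2) * x^2 ≤ Real.exp ((c/2) * x^2) := by nlinarith [Real.exp_pos ((c/2)*x^2)]
      calc x ^ 2 = (2/c) * ((c/2) * x^2) := by field_simp
        _ ≤ (2/c) * Real.exp ((c/2) * x^2) := by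
            apply mul_le_mul_of_nonneg_left h2 (by positivity)

    calc x ^ 2 * Real.exp (-c * x ^ 2)
        ≤ ((2/c) * Real.exp ((c/2) * x ^ 2)) * Real.exp (-c * x ^ 2) := by
          apply mul_le_mul_of_nonneg_right h1 (Real.exp_pos _).le
      _ = (2/c) * Real.exp (-(c/2) * x ^ 2) := by
          rw [mul_assoc, ← Real.exp_add]; congr 1; ring

lemma integral_exp_sq_mul {c : ℝ} (hc : 0 < c) :
    ∫ x : ℝ, x ^ 2 * Real.exp (-c * x ^ 2) = (1/(2*c)) * Real.sqrt (Real.pi / c) := by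
  have hF : ∀ x : ℝ, HasDerivAt (fun x : ℝ => x * Real.exp (-c * x ^ 2))
      (Real.exp (-c * x ^ 2) + x * (Real.exp (-c * x^2) * (-c * (2 * x)))) x := by
    intro x
    have h1 : HasDerivAt (fun x : ℝ => -c * x ^ 2) (-c * (2 * x)) x := by
      simpa using ((hasDerivAt_pow 2 x).const_mul (-c))
    exact ((hasDerivAt_id' x).mul (h1.exp)).congr_deriv (by ring)
  have hint : Integrable (fun x : ℝ => Real.exp (-c * x ^ 2) +
      x * (Real.exp (-c * x^2) * (-c * (2 * x)))) := by
    apply (integrable_exp_neg_mul_sq hc).add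
    have : (fun x : ℝ => x * (Real.exp (-c * x^2) * (-c * (2 * x)))) =
        fun x : ℝ => (-2*c) * (x^2 * Real.exp (-c * x^2)) := by ext x; ring
    rw [this]
    exact (integrable_sq_mul_exp_neg_mul_sq hc).const_mul _
  have h0 : ∫ x : ℝ, (Real.exp (-c * x ^ 2) + x * (Real.exp (-c * x^2) * (-c * (2 * x)))) = 0 := by
    apply integral_eq_zero_of_hasDerivAt_of_integrable hF hint
    have : (fun x : ℝ => x * Real.exp (-c * x ^ 2)) = fun x : ℝ => x * Real.exp (-c * x ^ 2) := rfl
    exact integrable_mul_exp_neg_mul_sq hc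
  rw [integral_add (integrable_exp_neg_mul_sq hc)] at h0
  · have hg := integral_gaussian c
    have heq2 : (fun x : ℝ => x * (Real.exp (-c * x^2) * (-c * (2 * x)))) =
        fun x : ℝ => (-2*c) • (x^2 * Real.exp (-c * x^2)) := by
      ext x; simp only [smul_eq_mul]; ring
    rw [heq2, integral_smul, smul_eq_mul, hg] at h0
    have h2c : (2*c) ≠ 0 := by positivity
    have hI : Real.sqrt (Real.pi/c) = 2*c*∫ x : ℝ, x^2 * Real.exp (-c * x^2) := by linarith
    rw [hI]
    field_simp
    congr 1; ext x; ring
  · have : (fun x : ℝ => x * (Real.exp (-c * x^2) * (-c * (2 * x)))) =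
        fun x : ℝ => (-2*c) * (x^2 * Real.exp (-c * x^2)) := by ext x; ring
    rw [this]
    exact (integrable_sq_mul_exp_neg_mul_sq hc).const_mul _

end oneDim

section gpdfInt
variable {σ : ℝ}

lemma gpdf_fun_eq (σ : ℝ) : gpdf σ = fun x =>
    (1 / (Real.sqrt (2 * Real.pi) * σ)) * Real.exp (-(1/(2*σ^2)) * x ^ 2) := by
  ext x; rw [gpdf_eq]

lemma integrable_gpdf (hσ : 0 < σ) : Integrable (gpdf σ) := by
  rw [gpdf_fun_eq]
  exact (integrable_exp_neg_mul_sq (by positivity)).const_mul _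

lemma integrable_gpdf_shift (hσ : 0 < σ) (a : ℝ) :
    Integrable (fun x => gpdf σ (x - a)) :=
  (integrable_gpdf hσ).comp_sub_right a

lemma sqrt_pi_div_inv (hσ : 0 < σ) :
    Real.sqrt (Real.pi / (1/(2*σ^2))) = Real.sqrt (2 * Real.pi) * σ := by
  rw [show Real.pi / (1/(2*σ^2)) = (2 * Real.pi) * σ^2 by field_simp,
    Real.sqrt_mul (by positivity), Real.sqrt_sq hσ.le]

lemma integral_gpdf (hσ : 0 < σ) : ∫ x, gpdf σ x = 1 := by
  rw [gpdf_fun_eq, integral_const_mul, integral_gaussian, sqrt_pi_div_inv hσ]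
  have h := sqrt_two_pi_pos
  field_simp

lemma integral_gpdf_shift (hσ : 0 < σ) (a : ℝ) : ∫ x, gpdf σ (x - a) = 1 := by
  rw [integral_sub_right_eq_self (gpdf σ) a]
  exact integral_gpdf hσ

lemma integrable_gpdf_mul_id (hσ : 0 < σ) :
    Integrable (fun x => gpdf σ x * x) := by
  have : (fun x : ℝ => gpdf σ x * x) = fun x =>
      (1 / (Real.sqrt (2 * Real.pi) * σ)) * (x * Real.exp (-(1/(2*σ^2)) * x ^ 2)) := by
    ext x; rw [gpdf_eq]; ring
  rw [this]
  exact (integrable_mul_exp_neg_mul_sq (by positivity)).const_mul _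

lemma integrable_gpdf_mul_sq (hσ : 0 < σ) :
    Integrable (fun x => gpdf σ x * x ^ 2) := by
  have : (fun x : ℝ => gpdf σ x * x ^ 2) = fun x =>
      (1 / (Real.sqrt (2 * Real.pi) * σ)) * (x ^ 2 * Real.exp (-(1/(2*σ^2)) * x ^ 2)) := by
    ext x; rw [gpdf_eq]; ring
  rw [this]
  exact (integrable_sq_mul_exp_neg_mul_sq (by positivity)).const_mul _

lemma integral_gpdf_mul_id (hσ : 0 < σ) : ∫ x, gpdf σ x * x = 0 := by
  have h := integral_neg_eq_self (fun x => gpdf σ x * x) volume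
  simp only [gpdf_even, mul_neg] at h
  rw [integral_neg] at h
  linarith

lemma integral_gpdf_mul_sq (hσ : 0 < σ) : ∫ x, gpdf σ x * x ^ 2 = σ ^ 2 := by
  have : (fun x : ℝ => gpdf σ x * x ^ 2) = fun x =>
      (1 / (Real.sqrt (2 * Real.pi) * σ)) * (x ^ 2 * Real.exp (-(1/(2*σ^2)) * x ^ 2)) := by
    ext x; rw [gpdf_eq]; ring
  rw [this, integral_const_mul, integral_exp_sq_mul (by positivity), sqrt_pi_div_inv hσ]
  have h := sqrt_two_pi_pos
  have h2 : (1:ℝ)/(2 * (1/(2*σ^2))) = σ^2 := by field_simp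
  rw [h2]
  field_simp

/-- general moment lemma pieces. -/
lemma gpdf_poly_decomp (σ a c₀ c₁ c₂ : ℝ) :
    (fun y => gpdf σ y * (c₀ + c₁ * (y + a) + c₂ * (y + a) ^ 2)) =
      fun y => ((c₀ + c₁*a + c₂*a^2) * gpdf σ y + (c₁ + 2*c₂*a) * (gpdf σ y * y))
        + c₂ * (gpdf σ y * y^2) := by
  ext y; ring

lemma integrable_gpdf_mul_poly (hσ : 0 < σ) (a c₀ c₁ c₂ : ℝ) :
    Integrable (fun y => gpdf σ y * (c₀ + c₁ * (y + a) + c₂ * (y + a) ^ 2)) := by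
  rw [gpdf_poly_decomp]
  exact (((integrable_gpdf hσ).const_mul _).add
    ((integrable_gpdf_mul_id hσ).const_mul _)).add ((integrable_gpdf_mul_sq hσ).const_mul _)

lemma shift_eq (σ a c₀ c₁ c₂ : ℝ) : (fun y => gpdf σ (y - a) * (c₀ + c₁ * y + c₂ * y ^ 2)) =
    fun y => (fun z => gpdf σ z * (c₀ + c₁ * (z + a) + c₂ * (z + a) ^ 2)) (y - a) := by
  ext y; ring_nf

lemma integrable_gpdf_shift_mul_poly (hσ : 0 < σ) (a c₀ c₁ c₂ : ℝ) :
    Integrable (fun y => gpdf σ (y - a) * (c₀ + c₁ * y + c₂ * y ^ 2)) := by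
  rw [shift_eq]
  exact (integrable_gpdf_mul_poly hσ a c₀ c₁ c₂).comp_sub_right a

lemma integral_gpdf_shift_mul_poly (hσ : 0 < σ) (a c₀ c₁ c₂ : ℝ) :
    ∫ y, gpdf σ (y - a) * (c₀ + c₁ * y + c₂ * y ^ 2)
      = c₀ + c₁ * a + c₂ * (σ ^ 2 + a ^ 2) := by
  rw [shift_eq,
    integral_sub_right_eq_self (fun z => gpdf σ z * (c₀ + c₁ * (z + a) + c₂ * (z + a) ^ 2)) a,
    gpdf_poly_decomp]
  have hA : Integrable (fun y => (c₀ + c₁*a + c₂*a^2) * gpdf σ y) :=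
    (integrable_gpdf hσ).const_mul _
  have hB : Integrable (fun y => (c₁ + 2*c₂*a) * (gpdf σ y * y)) :=
    (integrable_gpdf_mul_id hσ).const_mul _
  have hC : Integrable (fun y => c₂ * (gpdf σ y * y^2)) :=
    (integrable_gpdf_mul_sq hσ).const_mul _
  have hAB : Integrable (fun y => (c₀ + c₁*a + c₂*a^2) * gpdf σ y
      + (c₁ + 2*c₂*a) * (gpdf σ y * y)) := hA.add hB
  rw [integral_add hAB hC, integral_add hA hB,
    integral_const_mul, integral_const_mul, integral_const_mul,
    integral_gpdf hσ, integral_gpdf_mul_id hσ, integral_gpdf_mul_sq hσ]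
  ring

end gpdfInt

section algebraic

/-- Gaussian product identity (variance form). -/
lemma gpdf_mul_gpdf {v₁ v₂ : ℝ} (h₁ : 0 < v₁) (h₂ : 0 < v₂) (a s : ℝ) :
    gpdf (Real.sqrt v₁) a * gpdf (Real.sqrt v₂) (s - a) =
      gpdf (Real.sqrt (v₁ + v₂)) s *
        gpdf (Real.sqrt (v₁ * v₂ / (v₁ + v₂))) (a - v₁ / (v₁ + v₂) * s) := by
  have h12 : 0 < v₁ + v₂ := by linarith
  have h3 : (0:ℝ) < v₁ * v₂ / (v₁ + v₂) := by positivity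
  unfold gpdf
  rw [Real.sq_sqrt h₁.le, Real.sq_sqrt h₂.le, Real.sq_sqrt h12.le, Real.sq_sqrt h3.le]
  rw [mul_mul_mul_comm, ← Real.exp_add, mul_mul_mul_comm, ← Real.exp_add]
  have e : Real.sqrt v₁ * Real.sqrt v₂
      = Real.sqrt (v₁+v₂) * Real.sqrt (v₁*v₂/(v₁+v₂)) := by
    rw [← Real.sqrt_mul h₁.le, ← Real.sqrt_mul h12.le]
    congr 1
    field_simp
  congr 1
  · rw [div_mul_div_comm, div_mul_div_comm, one_mul]
    congr 1
    rw [mul_mul_mul_comm]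
    conv_rhs => rw [mul_mul_mul_comm]
    rw [e]
  · congr 1
    field_simp
    ring

end algebraic

section algebraic2

/-- split a product of two equal-variance Gaussians into difference/average coordinates. -/
lemma gpdf_pair_split {w : ℝ} (hw : 0 < w) (x y c : ℝ) :
    gpdf (Real.sqrt w) (x - c) * gpdf (Real.sqrt w) (y - c) =
      gpdf (Real.sqrt (2 * w)) (x - y) * gpdf (Real.sqrt (w / 2)) ((x + y) / 2 - c) := by
  have h2w : 0 < 2 * w := by linarith
  have hw2 : 0 < w / 2 := by linarith
  unfold gpdf
  rw [Real.sq_sqrt hw.le, Real.sq_sqrt h2w.le, Real.sq_sqrt hw2.le]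
  rw [mul_mul_mul_comm, ← Real.exp_add, mul_mul_mul_comm, ← Real.exp_add]
  have e : Real.sqrt w * Real.sqrt w = Real.sqrt (2*w) * Real.sqrt (w/2) := by
    rw [← Real.sqrt_mul hw.le, ← Real.sqrt_mul h2w.le]
    congr 1
    field_simp
  congr 1
  · rw [div_mul_div_comm, div_mul_div_comm, one_mul]
    congr 1
    rw [mul_mul_mul_comm]
    conv_rhs => rw [mul_mul_mul_comm]
    rw [e]
  · congr 1
    field_simp
    ring

lemma two_pi_sqrt_eq (v₁ v₂ : ℝ) (h₁ : 0 ≤ v₁) (h₂ : 0 ≤ v₂) :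
    Real.sqrt (2*Real.pi) * Real.sqrt v₁ * (Real.sqrt (2*Real.pi) * Real.sqrt v₂)
      = 2 * Real.pi * Real.sqrt (v₁ * v₂) := by
  rw [mul_mul_mul_comm, ← Real.sqrt_mul (by positivity), ← Real.sqrt_mul h₁,
    Real.sqrt_mul_self (by positivity : (0:ℝ) ≤ 2*Real.pi)]

/-- the bivariate normal as a product in difference/average coordinates -/
lemma fXY_split {ρ : ℝ} (hρ0 : 0 < ρ) (hρ1 : ρ < 1) (x y : ℝ) :
    fXY ρ x y = gpdf (Real.sqrt (2 * (1 - ρ))) (x - y) *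
      gpdf (Real.sqrt ((1 + ρ) / 2)) ((x + y) / 2) := by
  have h1 : (0:ℝ) < 2 * (1 - ρ) := by linarith
  have h2 : (0:ℝ) < (1 + ρ) / 2 := by linarith
  have h3 : (0:ℝ) < 1 - ρ^2 := by nlinarith
  unfold fXY gpdf
  rw [Real.sq_sqrt h1.le, Real.sq_sqrt h2.le]
  rw [mul_mul_mul_comm, ← Real.exp_add]
  rw [div_mul_div_comm, one_mul, two_pi_sqrt_eq _ _ h1.le h2.le]
  have e : 2 * (1-ρ) * ((1+ρ)/2) = 1 - ρ^2 := by ring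
  rw [e]
  congr 1
  congr 1
  have h1' : (1:ℝ) - ρ ≠ 0 := by linarith
  have h2' : (1:ℝ) + ρ ≠ 0 := by linarith
  field_simp
  ring

/-- conditional decomposition of the bivariate normal -/
lemma fXY_cond {ρ : ℝ} (hρ0 : 0 < ρ) (hρ1 : ρ < 1) (x y : ℝ) :
    fXY ρ x y = gpdf 1 x * gpdf (Real.sqrt (1 - ρ^2)) (y - ρ * x) := by
  have h3 : (0:ℝ) < 1 - ρ^2 := by nlinarith
  unfold fXY gpdf
  rw [Real.sq_sqrt h3.le]
  rw [mul_mul_mul_comm, ← Real.exp_add]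
  rw [div_mul_div_comm, one_mul]
  have e : Real.sqrt (2*Real.pi) * 1 * (Real.sqrt (2*Real.pi) * Real.sqrt (1-ρ^2))
      = 2 * Real.pi * Real.sqrt (1-ρ^2) := by
    rw [mul_one, ← mul_assoc]
    congr 1
    exact Real.mul_self_sqrt (by positivity)
  rw [e]
  congr 1
  rw [one_pow]
  field_simp
  ring

/-- Gaussian convolution identity. -/
lemma gpdf_conv {v₁ v₂ : ℝ} (h₁ : 0 < v₁) (h₂ : 0 < v₂) (a : ℝ) :
    ∫ t : ℝ, gpdf (Real.sqrt v₁) t * gpdf (Real.sqrt v₂) (a - t)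
      = gpdf (Real.sqrt (v₁ + v₂)) a := by
  have h12 : 0 < v₁ + v₂ := by linarith
  have h3 : (0:ℝ) < v₁ * v₂ / (v₁ + v₂) := by positivity
  have key : ∀ t : ℝ, gpdf (Real.sqrt v₁) t * gpdf (Real.sqrt v₂) (a - t) =
      gpdf (Real.sqrt (v₁ + v₂)) a *
        gpdf (Real.sqrt (v₁ * v₂ / (v₁ + v₂))) (t - v₁ / (v₁ + v₂) * a) :=
    fun t => gpdf_mul_gpdf h₁ h₂ t a
  simp_rw [key]
  rw [integral_const_mul, integral_gpdf_shift (Real.sqrt_pos.2 h3) _, mul_one]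

end algebraic2


lemma gpdf_flip (σ u w : ℝ) : gpdf σ (u - w) = gpdf σ (w - u) := by
  rw [← gpdf_even σ (w - u)]
  congr 1
  ring

section structural
variable {ρ b : ℝ} (hb : 0 < b) (hρ0 : 0 < ρ) (hρ1 : ρ < 1)
include hb hρ0 hρ1

lemma summable_Z : Summable fun j : ℤ => gpdf (Real.sqrt ρ) (b * j) := by
  have h := summable_gpdf (Real.sqrt_pos.2 hρ0) hb 0
  apply h.congr
  intro k
  rw [show (0:ℝ) - b * k = -(b*k) by ring, gpdf_even]

lemma Z_pos : 0 < ∑' j : ℤ, gpdf (Real.sqrt ρ) (b * j) := by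
  have hsq := Real.sqrt_pos.2 hρ0
  calc (0:ℝ) < gpdf (Real.sqrt ρ) (b * (0:ℤ)) := gpdf_pos hsq _
    _ ≤ ∑' j : ℤ, gpdf (Real.sqrt ρ) (b * j) :=
      (summable_Z hb hρ0 hρ1).le_tsum 0 (fun j _ => gpdf_nonneg hsq _)

lemma dgauss_nonneg (k : ℤ) : 0 ≤ dgauss b (Real.sqrt ρ) k := by
  have hsq := Real.sqrt_pos.2 hρ0
  exact div_nonneg (gpdf_nonneg hsq _) (Z_pos hb hρ0 hρ1).le

lemma tsum_dgauss : ∑' k : ℤ, dgauss b (Real.sqrt ρ) k = 1 := by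
  unfold dgauss
  rw [tsum_div_const]
  exact div_self (Z_pos hb hρ0 hρ1).ne'

lemma summable_dgauss : Summable fun k : ℤ => dgauss b (Real.sqrt ρ) k :=
  (summable_Z hb hρ0 hρ1).div_const _

/-- the structural identity for the mixture density -/
lemma fXbar_eq (x y : ℝ) :
    fXbarYbar ρ b x y = fXY ρ x y *
      (∑' k : ℤ, gpdf (Real.sqrt (ρ * (1 - ρ) / (1 + ρ)))
        (2 * ρ / (1 + ρ) * ((x + y) / 2) - b * k)) /
      (∑' j : ℤ, gpdf (Real.sqrt ρ) (b * j)) := by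
  have h1ρ : (0:ℝ) < 1 - ρ := by linarith
  have h2 : (0:ℝ) < (1 - ρ) / 2 := by linarith
  unfold fXbarYbar dgauss
  have hterm : ∀ k : ℤ,
      gpdf (Real.sqrt ρ) (b * k) / (∑' j : ℤ, gpdf (Real.sqrt ρ) (b * j)) *
        gpdf (Real.sqrt (1 - ρ)) (x - b * k) * gpdf (Real.sqrt (1 - ρ)) (y - b * k)
      = (fXY ρ x y / (∑' j : ℤ, gpdf (Real.sqrt ρ) (b * j))) *
        gpdf (Real.sqrt (ρ * (1 - ρ) / (1 + ρ))) (2 * ρ / (1 + ρ) * ((x + y) / 2) - b * k) := by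
    intro k
    have e1 : gpdf (Real.sqrt (1 - ρ)) (x - b * k) * gpdf (Real.sqrt (1 - ρ)) (y - b * k)
        = gpdf (Real.sqrt (2 * (1 - ρ))) (x - y) *
          gpdf (Real.sqrt ((1 - ρ) / 2)) ((x + y) / 2 - b * k) :=
      gpdf_pair_split h1ρ x y (b * k)
    have e2 : gpdf (Real.sqrt ρ) (b * k) * gpdf (Real.sqrt ((1 - ρ) / 2)) ((x + y) / 2 - b * k)
        = gpdf (Real.sqrt (ρ + (1 - ρ) / 2)) ((x + y) / 2) *
          gpdf (Real.sqrt (ρ * ((1 - ρ) / 2) / (ρ + (1 - ρ) / 2)))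
            (b * k - ρ / (ρ + (1 - ρ) / 2) * ((x + y) / 2)) :=
      gpdf_mul_gpdf hρ0 h2 (b * k) ((x + y) / 2)
    rw [show ρ + (1 - ρ) / 2 = (1 + ρ) / 2 by ring] at e2
    have h1p : (1:ℝ) + ρ ≠ 0 := by linarith
    rw [show ρ * ((1 - ρ) / 2) / ((1 + ρ) / 2) = ρ * (1 - ρ) / (1 + ρ) by
      field_simp] at e2
    rw [show ρ / ((1 + ρ) / 2) = 2 * ρ / (1 + ρ) by
      field_simp] at e2
    rw [gpdf_flip _ (b * (k:ℝ)) (2 * ρ / (1 + ρ) * ((x + y) / 2))] at e2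
    calc gpdf (Real.sqrt ρ) (b * k) / (∑' j : ℤ, gpdf (Real.sqrt ρ) (b * j)) *
          gpdf (Real.sqrt (1 - ρ)) (x - b * k) * gpdf (Real.sqrt (1 - ρ)) (y - b * k)
        = (gpdf (Real.sqrt (1 - ρ)) (x - b * k) * gpdf (Real.sqrt (1 - ρ)) (y - b * k)) *
            gpdf (Real.sqrt ρ) (b * k) / (∑' j : ℤ, gpdf (Real.sqrt ρ) (b * j)) := by
          ring
      _ = (gpdf (Real.sqrt (2 * (1 - ρ))) (x - y) *
            (gpdf (Real.sqrt ρ) (b * k) * gpdf (Real.sqrt ((1 - ρ) / 2)) ((x + y) / 2 - b * k)))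
            / (∑' j : ℤ, gpdf (Real.sqrt ρ) (b * j)) := by
          rw [e1]; ring
      _ = _ := by
          rw [e2, fXY_split hρ0 hρ1 x y]
          ring
  rw [tsum_congr hterm, tsum_mul_left]
  ring

end structural

section Zbounds
variable {ρ b : ℝ} (hb : 0 < b) (hρ0 : 0 < ρ) (hρ1 : ρ < 1)
include hb hρ0 hρ1

lemma sigma3_pos : (0:ℝ) < ρ * (1 - ρ) / (1 + ρ) := by
  have : (0:ℝ) < 1 - ρ := by linarith
  have : (0:ℝ) < 1 + ρ := by linarith
  positivity

lemma sigma4_pos : (0:ℝ) < 2 * ρ ^ 2 / (1 + ρ) := by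
  have : (0:ℝ) < 1 + ρ := by linarith
  positivity

lemma Z_conv : (∑' j : ℤ, gpdf (Real.sqrt ρ) (b * j)) =
    ∫ t : ℝ, gpdf (Real.sqrt (2 * ρ ^ 2 / (1 + ρ))) t *
      (∑' j : ℤ, gpdf (Real.sqrt (ρ * (1 - ρ) / (1 + ρ))) (t - b * j)) := by
  have h3 := sigma3_pos hb hρ0 hρ1
  have h4 := sigma4_pos hb hρ0 hρ1
  have hσ3 := Real.sqrt_pos.2 h3
  have hσ4 := Real.sqrt_pos.2 h4
  have hconv : ∀ j : ℤ, gpdf (Real.sqrt ρ) (b * j) =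
      ∫ t : ℝ, gpdf (Real.sqrt (2 * ρ ^ 2 / (1 + ρ))) t *
        gpdf (Real.sqrt (ρ * (1 - ρ) / (1 + ρ))) (t - b * j) := by
    intro j
    have h := gpdf_conv h4 h3 (b * j)
    rw [show 2 * ρ ^ 2 / (1 + ρ) + ρ * (1 - ρ) / (1 + ρ) = ρ by
      have : (1:ℝ) + ρ ≠ 0 := by linarith
      field_simp; ring] at h
    rw [← h]
    congr 1
    ext t
    rw [gpdf_flip _ (b * (j:ℝ)) t]
  have hint : ∀ j : ℤ, Integrable (fun t : ℝ =>
      gpdf (Real.sqrt (2 * ρ ^ 2 / (1 + ρ))) t *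
        gpdf (Real.sqrt (ρ * (1 - ρ) / (1 + ρ))) (t - b * j)) := by
    intro j
    apply Integrable.bdd_mul (c := 1 / (Real.sqrt (2 * Real.pi) * Real.sqrt (2 * ρ ^ 2 / (1 + ρ)))) (integrable_gpdf_shift hσ3 (b * j))
      (continuous_gpdf _).aestronglyMeasurable
    refine Filter.Eventually.of_forall (fun t => ?_)
    rw [Real.norm_eq_abs, abs_of_nonneg (gpdf_nonneg hσ4 _)]
    exact gpdf_le hσ4 t
  have hswap : ∫ t : ℝ, (∑' j : ℤ, gpdf (Real.sqrt (2 * ρ ^ 2 / (1 + ρ))) t *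
      gpdf (Real.sqrt (ρ * (1 - ρ) / (1 + ρ))) (t - b * j)) =
      ∑' j : ℤ, ∫ t : ℝ, gpdf (Real.sqrt (2 * ρ ^ 2 / (1 + ρ))) t *
        gpdf (Real.sqrt (ρ * (1 - ρ) / (1 + ρ))) (t - b * j) := by
    apply integral_tsum
    · exact fun j => (hint j).aestronglyMeasurable
    · have : ∀ j : ℤ, ∫⁻ t : ℝ, ‖gpdf (Real.sqrt (2 * ρ ^ 2 / (1 + ρ))) t *
          gpdf (Real.sqrt (ρ * (1 - ρ) / (1 + ρ))) (t - b * j)‖ₑ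
          = ENNReal.ofReal (gpdf (Real.sqrt ρ) (b * j)) := by
        intro j
        rw [hconv j, ofReal_integral_eq_lintegral_ofReal (hint j)]
        · apply lintegral_congr
          intro t
          rw [← Real.enorm_eq_ofReal (mul_nonneg (gpdf_nonneg hσ4 _) (gpdf_nonneg hσ3 _))]
        · filter_upwards with t
          exact mul_nonneg (gpdf_nonneg hσ4 _) (gpdf_nonneg hσ3 _)
      simp_rw [this]
      rw [← ENNReal.ofReal_tsum_of_nonneg (fun j => gpdf_nonneg (Real.sqrt_pos.2 hρ0) _)
        (summable_Z hb hρ0 hρ1)]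
      exact ENNReal.ofReal_ne_top
  calc (∑' j : ℤ, gpdf (Real.sqrt ρ) (b * j))
      = ∑' j : ℤ, ∫ t : ℝ, gpdf (Real.sqrt (2 * ρ ^ 2 / (1 + ρ))) t *
        gpdf (Real.sqrt (ρ * (1 - ρ) / (1 + ρ))) (t - b * j) := tsum_congr hconv
    _ = ∫ t : ℝ, (∑' j : ℤ, gpdf (Real.sqrt (2 * ρ ^ 2 / (1 + ρ))) t *
        gpdf (Real.sqrt (ρ * (1 - ρ) / (1 + ρ))) (t - b * j)) := hswap.symm
    _ = _ := by
      congr 1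
      ext t
      rw [tsum_mul_left]

lemma bZ_bounds :
    1 - flatness b (Real.sqrt (ρ * (1 - ρ) / (1 + ρ))) ≤
        b * (∑' j : ℤ, gpdf (Real.sqrt ρ) (b * j)) ∧
      b * (∑' j : ℤ, gpdf (Real.sqrt ρ) (b * j)) ≤
        1 + flatness b (Real.sqrt (ρ * (1 - ρ) / (1 + ρ))) := by
  have h3 := sigma3_pos hb hρ0 hρ1
  have h4 := sigma4_pos hb hρ0 hρ1
  have hσ3 := Real.sqrt_pos.2 h3
  have hσ4 := Real.sqrt_pos.2 h4
  set eps := flatness b (Real.sqrt (ρ * (1 - ρ) / (1 + ρ))) with heps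
  have hθ := fun t => theta_bounds (σ := Real.sqrt (ρ * (1 - ρ) / (1 + ρ))) hσ3 hb t
  -- pointwise bounds for the integrand
  have hup : ∀ t : ℝ, gpdf (Real.sqrt (2 * ρ ^ 2 / (1 + ρ))) t *
      (∑' j : ℤ, gpdf (Real.sqrt (ρ * (1 - ρ) / (1 + ρ))) (t - b * j)) ≤
      ((1 + eps) / b) * gpdf (Real.sqrt (2 * ρ ^ 2 / (1 + ρ))) t := by
    intro t
    have h := (hθ t).2
    have hg := gpdf_nonneg hσ4 t
    have hθn : 0 ≤ ∑' j : ℤ, gpdf (Real.sqrt (ρ * (1 - ρ) / (1 + ρ))) (t - b * j) :=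
      tsum_nonneg (fun j => gpdf_nonneg hσ3 _)
    rw [mul_comm ((1 + eps) / b)]
    apply mul_le_mul_of_nonneg_left _ hg
    rw [le_div_iff₀ hb]
    linarith
  have hlo : ∀ t : ℝ, ((1 - eps) / b) * gpdf (Real.sqrt (2 * ρ ^ 2 / (1 + ρ))) t ≤
      gpdf (Real.sqrt (2 * ρ ^ 2 / (1 + ρ))) t *
      (∑' j : ℤ, gpdf (Real.sqrt (ρ * (1 - ρ) / (1 + ρ))) (t - b * j)) := by
    intro t
    have h := (hθ t).1
    have hg := gpdf_nonneg hσ4 t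
    rw [mul_comm ((1 - eps) / b)]
    apply mul_le_mul_of_nonneg_left _ hg
    rw [div_le_iff₀ hb]
    linarith
  have hintg : Integrable (fun t : ℝ => gpdf (Real.sqrt (2 * ρ ^ 2 / (1 + ρ))) t *
      (∑' j : ℤ, gpdf (Real.sqrt (ρ * (1 - ρ) / (1 + ρ))) (t - b * j))) := by
    apply Integrable.mono' ((integrable_gpdf hσ4).const_mul ((1 + eps) / b))
    · exact ((measurable_gpdf _).mul (measurable_theta b hσ3)).aestronglyMeasurable
    · filter_upwards with t
      rw [Real.norm_eq_abs, abs_of_nonneg (mul_nonneg (gpdf_nonneg hσ4 _)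
        (tsum_nonneg (fun j => gpdf_nonneg hσ3 _)))]
      exact hup t
  have hZ := Z_conv hb hρ0 hρ1
  constructor
  · have := integral_mono ((integrable_gpdf hσ4).const_mul ((1 - eps) / b)) hintg hlo
    rw [integral_const_mul, integral_gpdf hσ4, mul_one] at this
    rw [hZ]
    rw [div_le_iff₀ hb] at this
    linarith [this]
  · have := integral_mono hintg ((integrable_gpdf hσ4).const_mul ((1 + eps) / b)) hup
    rw [integral_const_mul, integral_gpdf hσ4, mul_one] at this
    rw [hZ]
    rw [le_div_iff₀ hb] at this
    linarith [this]

end Zbounds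

section twoDim
variable {ρ b : ℝ} (hρ0 : 0 < ρ) (hρ1 : ρ < 1)
include hρ0 hρ1

lemma q_nonneg (x y : ℝ) : 0 ≤ x ^ 2 + y ^ 2 - 2 * ρ * x * y := by
  nlinarith [sq_nonneg (x - y), sq_nonneg (x + y), sq_nonneg x, sq_nonneg y]

lemma q_le (x y : ℝ) : x ^ 2 + y ^ 2 - 2 * ρ * x * y ≤ (1 + ρ) * (x ^ 2 + y ^ 2) := by
  nlinarith [sq_nonneg (x + y)]

lemma one_sub_rho_sq_pos : (0:ℝ) < 1 - ρ ^ 2 := by nlinarith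

lemma fXY_pos (x y : ℝ) : 0 < fXY ρ x y := by
  have h := one_sub_rho_sq_pos hρ0 hρ1
  have : 0 < Real.sqrt (1 - ρ ^ 2) := Real.sqrt_pos.2 h
  have := Real.pi_pos
  unfold fXY
  positivity

lemma continuous_fXY : Continuous (fun p : ℝ × ℝ => fXY ρ p.1 p.2) := by
  unfold fXY
  fun_prop

omit hρ0 hρ1 in
lemma volume_prod_eq : (volume : Measure (ℝ × ℝ)) = (volume : Measure ℝ).prod volume :=
  Measure.volume_eq_prod _ _

lemma fXY_le (x y : ℝ) : fXY ρ x y ≤ (1 / (2 * Real.pi * Real.sqrt (1 - ρ ^ 2))) *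
    (Real.exp (-(1/(2*(1+ρ))) * x ^ 2) * Real.exp (-(1/(2*(1+ρ))) * y ^ 2)) := by
  have h := one_sub_rho_sq_pos hρ0 hρ1
  have hs : 0 < Real.sqrt (1 - ρ ^ 2) := Real.sqrt_pos.2 h
  have hpi := Real.pi_pos
  unfold fXY
  apply mul_le_mul_of_nonneg_left _ (by positivity)
  rw [← Real.exp_add]
  apply Real.exp_le_exp.2
  have h1p : (0:ℝ) < 1 + ρ := by linarith
  have key : -(x ^ 2 + y ^ 2 - 2 * ρ * x * y) / (2 * (1 - ρ ^ 2))
      ≤ -(x^2 + y^2) / (2 * (1 + ρ)) := by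
    rw [div_le_div_iff₀ (by positivity) (by positivity)]
    nlinarith [mul_nonneg (mul_nonneg h1p.le hρ0.le) (sq_nonneg (x - y))]
  calc -(x ^ 2 + y ^ 2 - 2 * ρ * x * y) / (2 * (1 - ρ ^ 2))
      ≤ -(x^2 + y^2) / (2 * (1 + ρ)) := key
    _ = -(1/(2*(1+ρ))) * x ^ 2 + -(1/(2*(1+ρ))) * y ^ 2 := by field_simp; ring

lemma integrable_fXY2 : Integrable (fun p : ℝ × ℝ => fXY ρ p.1 p.2) := by
  have h := one_sub_rho_sq_pos hρ0 hρ1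
  have hs : 0 < Real.sqrt (1 - ρ ^ 2) := Real.sqrt_pos.2 h
  have hpi := Real.pi_pos
  have hβ : (0:ℝ) < 1/(2*(1+ρ)) := by positivity
  have base : Integrable (fun p : ℝ × ℝ =>
      Real.exp (-(1/(2*(1+ρ))) * p.1 ^ 2) * Real.exp (-(1/(2*(1+ρ))) * p.2 ^ 2)) := by
    rw [volume_prod_eq]
    exact (integrable_exp_neg_mul_sq hβ).mul_prod (integrable_exp_neg_mul_sq hβ)
  apply Integrable.mono' (base.const_mul (1 / (2 * Real.pi * Real.sqrt (1 - ρ ^ 2))))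
    (continuous_fXY hρ0 hρ1).aestronglyMeasurable
  filter_upwards with p
  rw [Real.norm_eq_abs, abs_of_nonneg (fXY_pos hρ0 hρ1 p.1 p.2).le]
  exact fXY_le hρ0 hρ1 p.1 p.2

lemma integrable_fXYq2 : Integrable (fun p : ℝ × ℝ =>
    fXY ρ p.1 p.2 * (p.1 ^ 2 + p.2 ^ 2 - 2 * ρ * p.1 * p.2)) := by
  have h := one_sub_rho_sq_pos hρ0 hρ1
  have hs : 0 < Real.sqrt (1 - ρ ^ 2) := Real.sqrt_pos.2 h
  have hpi := Real.pi_pos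
  have hβ : (0:ℝ) < 1/(2*(1+ρ)) := by positivity
  set K := (1 / (2 * Real.pi * Real.sqrt (1 - ρ ^ 2))) * (1 + ρ) with hK
  have hKpos : 0 < K := by positivity
  have base : Integrable (fun p : ℝ × ℝ => K *
      ((p.1 ^ 2 * Real.exp (-(1/(2*(1+ρ))) * p.1 ^ 2)) * Real.exp (-(1/(2*(1+ρ))) * p.2 ^ 2) +
       Real.exp (-(1/(2*(1+ρ))) * p.1 ^ 2) * (p.2 ^ 2 * Real.exp (-(1/(2*(1+ρ))) * p.2 ^ 2)))) := by
    apply Integrable.const_mul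
    rw [volume_prod_eq]
    exact ((integrable_sq_mul_exp_neg_mul_sq hβ).mul_prod (integrable_exp_neg_mul_sq hβ)).add
      ((integrable_exp_neg_mul_sq hβ).mul_prod (integrable_sq_mul_exp_neg_mul_sq hβ))
  apply Integrable.mono' base
  · exact ((continuous_fXY hρ0 hρ1).mul (by fun_prop)).aestronglyMeasurable
  · filter_upwards with p
    rw [Real.norm_eq_abs, abs_of_nonneg (mul_nonneg (fXY_pos hρ0 hρ1 p.1 p.2).le
      (q_nonneg hρ0 hρ1 p.1 p.2))]
    calc fXY ρ p.1 p.2 * (p.1 ^ 2 + p.2 ^ 2 - 2 * ρ * p.1 * p.2)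
        ≤ fXY ρ p.1 p.2 * ((1 + ρ) * (p.1 ^ 2 + p.2 ^ 2)) := by
          apply mul_le_mul_of_nonneg_left (q_le hρ0 hρ1 p.1 p.2) (fXY_pos hρ0 hρ1 p.1 p.2).le
      _ ≤ ((1 / (2 * Real.pi * Real.sqrt (1 - ρ ^ 2))) *
            (Real.exp (-(1/(2*(1+ρ))) * p.1 ^ 2) * Real.exp (-(1/(2*(1+ρ))) * p.2 ^ 2))) *
          ((1 + ρ) * (p.1 ^ 2 + p.2 ^ 2)) := by
          apply mul_le_mul_of_nonneg_right (fXY_le hρ0 hρ1 p.1 p.2) (by positivity)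
      _ = K * ((p.1 ^ 2 * Real.exp (-(1/(2*(1+ρ))) * p.1 ^ 2)) * Real.exp (-(1/(2*(1+ρ))) * p.2 ^ 2) +
          Real.exp (-(1/(2*(1+ρ))) * p.1 ^ 2) * (p.2 ^ 2 * Real.exp (-(1/(2*(1+ρ))) * p.2 ^ 2))) := by
          rw [hK]; ring

lemma integral_fXY2 : ∫ p : ℝ × ℝ, fXY ρ p.1 p.2 = 1 := by
  have h := one_sub_rho_sq_pos hρ0 hρ1
  have hσ : 0 < Real.sqrt (1 - ρ ^ 2) := Real.sqrt_pos.2 h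
  rw [volume_prod_eq] at *
  rw [integral_prod _ (volume_prod_eq ▸ integrable_fXY2 hρ0 hρ1)]
  have inner : ∀ x : ℝ, ∫ y : ℝ, fXY ρ x y = gpdf 1 x := by
    intro x
    simp_rw [fXY_cond hρ0 hρ1 x]
    rw [integral_const_mul, integral_gpdf_shift hσ (ρ * x), mul_one]
  simp_rw [inner]
  exact integral_gpdf one_pos

lemma integral_fXYq2 : ∫ p : ℝ × ℝ, fXY ρ p.1 p.2 * (p.1 ^ 2 + p.2 ^ 2 - 2 * ρ * p.1 * p.2)
    = 2 * (1 - ρ ^ 2) := by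
  have h := one_sub_rho_sq_pos hρ0 hρ1
  have hσ : 0 < Real.sqrt (1 - ρ ^ 2) := Real.sqrt_pos.2 h
  rw [volume_prod_eq] at *
  rw [integral_prod _ (volume_prod_eq ▸ integrable_fXYq2 hρ0 hρ1)]
  have inner : ∀ x : ℝ, ∫ y : ℝ, fXY ρ x y * (x ^ 2 + y ^ 2 - 2 * ρ * x * y)
      = gpdf 1 x * ((1 - ρ^2) + 0 * x + (1 - ρ^2) * x ^ 2) := by
    intro x
    have e : ∀ y : ℝ, fXY ρ x y * (x ^ 2 + y ^ 2 - 2 * ρ * x * y)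
        = gpdf 1 x * (gpdf (Real.sqrt (1 - ρ^2)) (y - ρ * x) *
            (x ^ 2 + (-2 * ρ * x) * y + 1 * y ^ 2)) := by
      intro y
      rw [fXY_cond hρ0 hρ1 x y]
      ring
    simp_rw [e]
    rw [integral_const_mul, integral_gpdf_shift_mul_poly hσ (ρ * x) (x^2) (-2*ρ*x) 1,
      Real.sq_sqrt h.le]
    congr 1
    ring
  simp_rw [inner]
  have hfin := integral_gpdf_shift_mul_poly one_pos 0 (1 - ρ^2) 0 (1 - ρ^2)
  simp only [sub_zero] at hfin
  rw [hfin]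
  ring

end twoDim

section Gfacts
variable {ρ b : ℝ} (hb : 0 < b) (hρ0 : 0 < ρ) (hρ1 : ρ < 1)
include hb hρ0 hρ1

lemma G_nonneg (x y : ℝ) : 0 ≤ fXbarYbar ρ b x y := by
  have hσ := Real.sqrt_pos.2 (show (0:ℝ) < 1 - ρ by linarith)
  exact tsum_nonneg (fun k => mul_nonneg (mul_nonneg (dgauss_nonneg hb hρ0 hρ1 k)
    (gpdf_nonneg hσ _)) (gpdf_nonneg hσ _))

lemma G_bounds (hε : flatness b (Real.sqrt (ρ * (1 - ρ) / (1 + ρ))) < 1/2) (x y : ℝ) :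
    (1 - flatness b (Real.sqrt (ρ * (1 - ρ) / (1 + ρ)))) /
        (1 + flatness b (Real.sqrt (ρ * (1 - ρ) / (1 + ρ)))) * fXY ρ x y
      ≤ fXbarYbar ρ b x y ∧
    fXbarYbar ρ b x y ≤ (1 + flatness b (Real.sqrt (ρ * (1 - ρ) / (1 + ρ)))) /
        (1 - flatness b (Real.sqrt (ρ * (1 - ρ) / (1 + ρ)))) * fXY ρ x y := by
  have h3 := sigma3_pos hb hρ0 hρ1
  have hσ3 := Real.sqrt_pos.2 h3
  set eps := flatness b (Real.sqrt (ρ * (1 - ρ) / (1 + ρ))) with heps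
  have heps0 : 0 ≤ eps := flatness_nonneg _ _
  have heps1 : 0 < 1 - eps := by linarith
  have heps2 : 0 < 1 + eps := by linarith
  set θ := ∑' k : ℤ, gpdf (Real.sqrt (ρ * (1 - ρ) / (1 + ρ)))
    (2 * ρ / (1 + ρ) * ((x + y) / 2) - b * k) with hθdef
  set Z := ∑' j : ℤ, gpdf (Real.sqrt ρ) (b * j) with hZdef
  have hZpos : 0 < Z := Z_pos hb hρ0 hρ1
  have hbθ := theta_bounds hσ3 hb (2 * ρ / (1 + ρ) * ((x + y) / 2))
  have hbZ := bZ_bounds hb hρ0 hρ1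
  have hθn : 0 ≤ θ := tsum_nonneg (fun k => gpdf_nonneg hσ3 _)
  have hFn : 0 ≤ fXY ρ x y := (fXY_pos hρ0 hρ1 x y).le
  have hGeq : fXbarYbar ρ b x y = fXY ρ x y * (θ / Z) := by
    rw [fXbar_eq hb hρ0 hρ1 x y, mul_div_assoc]
  have hratio_eq : θ / Z = (b * θ) / (b * Z) := by
    rw [mul_div_mul_left _ _ hb.ne']
  have hratio_up : θ / Z ≤ (1 + eps) / (1 - eps) := by
    rw [hratio_eq]
    exact div_le_div₀ heps2.le hbθ.2 heps1 hbZ.1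
  have hratio_lo : (1 - eps) / (1 + eps) ≤ θ / Z := by
    rw [hratio_eq]
    exact div_le_div₀ (by linarith [hbθ.1] : 0 ≤ b * θ) hbθ.1
      (by positivity) hbZ.2
  constructor
  · rw [hGeq, mul_comm ((1 - eps) / (1 + eps))]
    exact mul_le_mul_of_nonneg_left hratio_lo hFn
  · rw [hGeq, mul_comm ((1 + eps) / (1 - eps))]
    exact mul_le_mul_of_nonneg_left hratio_up hFn

lemma G_pos (hε : flatness b (Real.sqrt (ρ * (1 - ρ) / (1 + ρ))) < 1/2) (x y : ℝ) :
    0 < fXbarYbar ρ b x y := by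
  have h := (G_bounds hb hρ0 hρ1 hε x y).1
  have heps0 : 0 ≤ flatness b (Real.sqrt (ρ * (1 - ρ) / (1 + ρ))) := flatness_nonneg _ _
  have : 0 < (1 - flatness b (Real.sqrt (ρ * (1 - ρ) / (1 + ρ)))) /
      (1 + flatness b (Real.sqrt (ρ * (1 - ρ) / (1 + ρ)))) * fXY ρ x y := by
    have := fXY_pos hρ0 hρ1 x y
    apply mul_pos (div_pos (by linarith) (by linarith)) this
  linarith

lemma measurable_G : Measurable (fun p : ℝ × ℝ => fXbarYbar ρ b p.1 p.2) := by
  have h3 := sigma3_pos hb hρ0 hρ1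
  have hσ3 := Real.sqrt_pos.2 h3
  have heq : (fun p : ℝ × ℝ => fXbarYbar ρ b p.1 p.2) = fun p : ℝ × ℝ =>
      fXY ρ p.1 p.2 * ((fun u : ℝ => ∑' k : ℤ, gpdf (Real.sqrt (ρ * (1 - ρ) / (1 + ρ)))
        (u - b * k)) (2 * ρ / (1 + ρ) * ((p.1 + p.2) / 2))) /
      (∑' j : ℤ, gpdf (Real.sqrt ρ) (b * j)) := by
    ext p
    rw [fXbar_eq hb hρ0 hρ1 p.1 p.2]
  rw [heq]
  apply Measurable.div_const
  apply ((continuous_fXY hρ0 hρ1).measurable).mul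
  exact (measurable_theta b hσ3).comp (by fun_prop)

lemma summable_term (x y : ℝ) : Summable fun k : ℤ =>
    dgauss b (Real.sqrt ρ) k * gpdf (Real.sqrt (1 - ρ)) (x - b * k) *
      gpdf (Real.sqrt (1 - ρ)) (y - b * k) := by
  have hσ := Real.sqrt_pos.2 (show (0:ℝ) < 1 - ρ by linarith)
  set K := 1 / (Real.sqrt (2 * Real.pi) * Real.sqrt (1 - ρ)) with hK
  have hKpos : 0 < K := by have := sqrt_two_pi_pos; positivity
  apply Summable.of_nonneg_of_le
    (fun k => mul_nonneg (mul_nonneg (dgauss_nonneg hb hρ0 hρ1 k) (gpdf_nonneg hσ _))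
      (gpdf_nonneg hσ _))
    (f := fun k : ℤ => dgauss b (Real.sqrt ρ) k * (K * K))
  · intro k
    calc dgauss b (Real.sqrt ρ) k * gpdf (Real.sqrt (1 - ρ)) (x - b * k) *
          gpdf (Real.sqrt (1 - ρ)) (y - b * k)
        ≤ dgauss b (Real.sqrt ρ) k * gpdf (Real.sqrt (1 - ρ)) (x - b * k) * K := by
          apply mul_le_mul_of_nonneg_left (gpdf_le hσ _)
            (mul_nonneg (dgauss_nonneg hb hρ0 hρ1 k) (gpdf_nonneg hσ _))
      _ ≤ dgauss b (Real.sqrt ρ) k * K * K := by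
          apply mul_le_mul_of_nonneg_right _ hKpos.le
          exact mul_le_mul_of_nonneg_left (gpdf_le hσ _) (dgauss_nonneg hb hρ0 hρ1 k)
      _ = dgauss b (Real.sqrt ρ) k * (K * K) := by ring
  · exact (summable_dgauss hb hρ0 hρ1).mul_right _

lemma lintegral_G : ∫⁻ p : ℝ × ℝ, ENNReal.ofReal (fXbarYbar ρ b p.1 p.2) = 1 := by
  have hσ := Real.sqrt_pos.2 (show (0:ℝ) < 1 - ρ by linarith)
  have hterm_nonneg : ∀ (k : ℤ) (x y : ℝ), 0 ≤ dgauss b (Real.sqrt ρ) k *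
      gpdf (Real.sqrt (1 - ρ)) (x - b * k) * gpdf (Real.sqrt (1 - ρ)) (y - b * k) :=
    fun k x y => mul_nonneg (mul_nonneg (dgauss_nonneg hb hρ0 hρ1 k) (gpdf_nonneg hσ _))
      (gpdf_nonneg hσ _)
  have h1 : ∀ p : ℝ × ℝ, ENNReal.ofReal (fXbarYbar ρ b p.1 p.2) =
      ∑' k : ℤ, ENNReal.ofReal (dgauss b (Real.sqrt ρ) k *
        gpdf (Real.sqrt (1 - ρ)) (p.1 - b * k) * gpdf (Real.sqrt (1 - ρ)) (p.2 - b * k)) := by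
    intro p
    exact ENNReal.ofReal_tsum_of_nonneg (fun k => hterm_nonneg k p.1 p.2)
      (summable_term hb hρ0 hρ1 p.1 p.2)
  simp_rw [h1]
  have hg : Measurable (gpdf (Real.sqrt (1 - ρ))) := measurable_gpdf _
  have m1 : ∀ k : ℤ, Measurable fun p : ℝ × ℝ => gpdf (Real.sqrt (1 - ρ)) (p.1 - b * k) :=
    fun k => hg.comp (measurable_fst.sub measurable_const)
  have m2 : ∀ k : ℤ, Measurable fun p : ℝ × ℝ => gpdf (Real.sqrt (1 - ρ)) (p.2 - b * k) :=
    fun k => hg.comp (measurable_snd.sub measurable_const)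
  have hmeas : ∀ k : ℤ, AEMeasurable (fun p : ℝ × ℝ => ENNReal.ofReal (dgauss b (Real.sqrt ρ) k *
      gpdf (Real.sqrt (1 - ρ)) (p.1 - b * k) * gpdf (Real.sqrt (1 - ρ)) (p.2 - b * k)))
      (volume : Measure (ℝ × ℝ)) :=
    fun k => (((m1 k).const_mul _).mul (m2 k)).ennreal_ofReal.aemeasurable
  rw [lintegral_tsum hmeas]
  have h3 : ∀ k : ℤ, ∫⁻ p : ℝ × ℝ, ENNReal.ofReal (dgauss b (Real.sqrt ρ) k *
      gpdf (Real.sqrt (1 - ρ)) (p.1 - b * k) * gpdf (Real.sqrt (1 - ρ)) (p.2 - b * k))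
      = ENNReal.ofReal (dgauss b (Real.sqrt ρ) k) := by
    intro k
    have hsplit : ∀ p : ℝ × ℝ, ENNReal.ofReal (dgauss b (Real.sqrt ρ) k *
        gpdf (Real.sqrt (1 - ρ)) (p.1 - b * k) * gpdf (Real.sqrt (1 - ρ)) (p.2 - b * k))
        = ENNReal.ofReal (dgauss b (Real.sqrt ρ) k * gpdf (Real.sqrt (1 - ρ)) (p.1 - b * k)) *
          ENNReal.ofReal (gpdf (Real.sqrt (1 - ρ)) (p.2 - b * k)) := by
      intro p
      rw [← ENNReal.ofReal_mul (mul_nonneg (dgauss_nonneg hb hρ0 hρ1 k) (gpdf_nonneg hσ _))]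
    simp_rw [hsplit]
    have hmeas2 : AEMeasurable (fun p : ℝ × ℝ =>
        ENNReal.ofReal (dgauss b (Real.sqrt ρ) k * gpdf (Real.sqrt (1 - ρ)) (p.1 - b * k)) *
          ENNReal.ofReal (gpdf (Real.sqrt (1 - ρ)) (p.2 - b * k)))
        ((volume : Measure ℝ).prod (volume : Measure ℝ)) :=
      ((((m1 k).const_mul _).ennreal_ofReal).mul ((m2 k).ennreal_ofReal)).aemeasurable
    rw [volume_prod_eq, lintegral_prod _ hmeas2]
    have hinner : ∀ x : ℝ, ∫⁻ y : ℝ, ENNReal.ofReal (dgauss b (Real.sqrt ρ) k *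
        gpdf (Real.sqrt (1 - ρ)) (x - b * k)) * ENNReal.ofReal (gpdf (Real.sqrt (1 - ρ)) (y - b * k))
        = ENNReal.ofReal (dgauss b (Real.sqrt ρ) k * gpdf (Real.sqrt (1 - ρ)) (x - b * k)) := by
      intro x
      rw [lintegral_const_mul' _ _ ENNReal.ofReal_ne_top]
      have : ∫⁻ y : ℝ, ENNReal.ofReal (gpdf (Real.sqrt (1 - ρ)) (y - b * k)) = 1 := by
        rw [← ofReal_integral_eq_lintegral_ofReal (integrable_gpdf_shift hσ (b * k))
          (Filter.Eventually.of_forall (fun y => gpdf_nonneg hσ _)),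
          integral_gpdf_shift hσ, ENNReal.ofReal_one]
      rw [this, mul_one]
    simp_rw [hinner]
    have hsplit2 : ∀ x : ℝ, ENNReal.ofReal (dgauss b (Real.sqrt ρ) k *
        gpdf (Real.sqrt (1 - ρ)) (x - b * k)) = ENNReal.ofReal (dgauss b (Real.sqrt ρ) k) *
        ENNReal.ofReal (gpdf (Real.sqrt (1 - ρ)) (x - b * k)) := by
      intro x
      rw [← ENNReal.ofReal_mul (dgauss_nonneg hb hρ0 hρ1 k)]
    simp_rw [hsplit2]
    rw [lintegral_const_mul' _ _ ENNReal.ofReal_ne_top]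
    have : ∫⁻ x : ℝ, ENNReal.ofReal (gpdf (Real.sqrt (1 - ρ)) (x - b * k)) = 1 := by
      rw [← ofReal_integral_eq_lintegral_ofReal (integrable_gpdf_shift hσ (b * k))
        (Filter.Eventually.of_forall (fun y => gpdf_nonneg hσ _)),
        integral_gpdf_shift hσ, ENNReal.ofReal_one]
    rw [this, mul_one]
  simp_rw [h3]
  rw [← ENNReal.ofReal_tsum_of_nonneg (fun k => dgauss_nonneg hb hρ0 hρ1 k)
    (summable_dgauss hb hρ0 hρ1), tsum_dgauss hb hρ0 hρ1, ENNReal.ofReal_one]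

lemma integrable_G2 : Integrable (fun p : ℝ × ℝ => fXbarYbar ρ b p.1 p.2) := by
  refine ⟨(measurable_G hb hρ0 hρ1).aestronglyMeasurable, ?_⟩
  rw [hasFiniteIntegral_iff_norm]
  have : ∀ p : ℝ × ℝ, ENNReal.ofReal ‖fXbarYbar ρ b p.1 p.2‖ =
      ENNReal.ofReal (fXbarYbar ρ b p.1 p.2) := by
    intro p
    rw [Real.norm_eq_abs, abs_of_nonneg (G_nonneg hb hρ0 hρ1 p.1 p.2)]
  simp_rw [this]
  rw [lintegral_G hb hρ0 hρ1]
  exact ENNReal.one_lt_top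

lemma integral_G2 : ∫ p : ℝ × ℝ, fXbarYbar ρ b p.1 p.2 = 1 := by
  have hnn : (0 : ℝ × ℝ → ℝ) ≤ᵐ[(volume : Measure (ℝ × ℝ))]
      (fun p : ℝ × ℝ => fXbarYbar ρ b p.1 p.2) :=
    Filter.Eventually.of_forall (fun p => G_nonneg hb hρ0 hρ1 p.1 p.2)
  have key := integral_eq_lintegral_of_nonneg_ae hnn
    (measurable_G hb hρ0 hρ1).aestronglyMeasurable
  rw [key, lintegral_G hb hρ0 hρ1]
  simp

end Gfacts

section final
variable {ρ b : ℝ} (hb : 0 < b) (hρ0 : 0 < ρ) (hρ1 : ρ < 1)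
include hb hρ0 hρ1

lemma integrable_Gq (hε : flatness b (Real.sqrt (ρ * (1 - ρ) / (1 + ρ))) < 1/2) :
    Integrable (fun p : ℝ × ℝ => fXbarYbar ρ b p.1 p.2 *
      (p.1 ^ 2 + p.2 ^ 2 - 2 * ρ * p.1 * p.2)) := by
  set eps := flatness b (Real.sqrt (ρ * (1 - ρ) / (1 + ρ))) with heps
  have heps0 : 0 ≤ eps := flatness_nonneg _ _
  apply Integrable.mono' ((integrable_fXYq2 hρ0 hρ1).const_mul ((1 + eps) / (1 - eps)))
  · exact ((measurable_G hb hρ0 hρ1).mul (by fun_prop)).aestronglyMeasurable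
  · filter_upwards with p
    rw [Real.norm_eq_abs, abs_of_nonneg (mul_nonneg (G_nonneg hb hρ0 hρ1 p.1 p.2)
      (q_nonneg hρ0 hρ1 p.1 p.2))]
    rw [← mul_assoc]
    exact mul_le_mul_of_nonneg_right ((G_bounds hb hρ0 hρ1 hε p.1 p.2).2)
      (q_nonneg hρ0 hρ1 p.1 p.2)

lemma integral_Gq_ge (hε : flatness b (Real.sqrt (ρ * (1 - ρ) / (1 + ρ))) < 1/2) :
    (1 - flatness b (Real.sqrt (ρ * (1 - ρ) / (1 + ρ)))) /
        (1 + flatness b (Real.sqrt (ρ * (1 - ρ) / (1 + ρ)))) * (2 * (1 - ρ ^ 2)) ≤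
      ∫ p : ℝ × ℝ, fXbarYbar ρ b p.1 p.2 * (p.1 ^ 2 + p.2 ^ 2 - 2 * ρ * p.1 * p.2) := by
  set eps := flatness b (Real.sqrt (ρ * (1 - ρ) / (1 + ρ))) with heps
  have hmono := integral_mono ((integrable_fXYq2 hρ0 hρ1).const_mul ((1 - eps) / (1 + eps)))
    (integrable_Gq hb hρ0 hρ1 hε) (fun p => ?_)
  · rw [integral_const_mul, integral_fXYq2 hρ0 hρ1] at hmono
    exact hmono
  · rw [← mul_assoc]
    exact mul_le_mul_of_nonneg_right ((G_bounds hb hρ0 hρ1 hε p.1 p.2).1)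
      (q_nonneg hρ0 hρ1 p.1 p.2)

lemma log_fXY_eq (x y : ℝ) : Real.log (fXY ρ x y) =
    Real.log (1 / (2 * Real.pi * Real.sqrt (1 - ρ ^ 2))) -
      (x ^ 2 + y ^ 2 - 2 * ρ * x * y) / (2 * (1 - ρ ^ 2)) := by
  have h := one_sub_rho_sq_pos hρ0 hρ1
  have hs : 0 < Real.sqrt (1 - ρ ^ 2) := Real.sqrt_pos.2 h
  have hpi := Real.pi_pos
  unfold fXY
  rw [Real.log_mul (by positivity) (Real.exp_ne_zero _), Real.log_exp]
  ring

theorem main_bound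
    (hε : flatness b (Real.sqrt (ρ * (1 - ρ) / (1 + ρ))) < 1 / 2) :
    -∫ p : ℝ × ℝ, fXbarYbar ρ b p.1 p.2 * Real.log (fXbarYbar ρ b p.1 p.2) ≥
      Real.log (2 * Real.pi * Real.sqrt (1 - ρ ^ 2)) + 1 -
        5 * flatness b (Real.sqrt (ρ * (1 - ρ) / (1 + ρ))) := by
  have h2 := one_sub_rho_sq_pos hρ0 hρ1
  have hs : 0 < Real.sqrt (1 - ρ ^ 2) := Real.sqrt_pos.2 h2
  have hpi := Real.pi_pos
  set eps := flatness b (Real.sqrt (ρ * (1 - ρ) / (1 + ρ))) with heps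
  have heps0 : 0 ≤ eps := flatness_nonneg _ _
  have heps1 : (0:ℝ) < 1 - eps := by linarith
  have heps2 : (0:ℝ) < 1 + eps := by linarith
  set C := (1 + eps) / (1 - eps) with hC
  set r := (1 - eps) / (1 + eps) with hr
  have hCpos : 0 < C := by positivity
  have hC1 : 1 ≤ C := by
    rw [hC, le_div_iff₀ heps1]
    linarith
  have hlogC_nonneg : 0 ≤ Real.log C := Real.log_nonneg hC1
  have hrC : r = C⁻¹ := by
    rw [hr, hC]
    rw [inv_div]
  have hlogr : Real.log r = -Real.log C := by
    rw [hrC, Real.log_inv]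
  set K := 1 / (2 * Real.pi * Real.sqrt (1 - ρ ^ 2)) with hK
  have hKpos : 0 < K := by positivity
  have hlogK : Real.log K = -Real.log (2 * Real.pi * Real.sqrt (1 - ρ ^ 2)) := by
    rw [hK, one_div, Real.log_inv]
  set q : ℝ × ℝ → ℝ := fun p => p.1 ^ 2 + p.2 ^ 2 - 2 * ρ * p.1 * p.2 with hq
  set G : ℝ × ℝ → ℝ := fun p => fXbarYbar ρ b p.1 p.2 with hG
  set F : ℝ × ℝ → ℝ := fun p => fXY ρ p.1 p.2 with hF
  have hGpos : ∀ p, 0 < G p := fun p => G_pos hb hρ0 hρ1 hε p.1 p.2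
  have hFpos : ∀ p, 0 < F p := fun p => fXY_pos hρ0 hρ1 p.1 p.2
  have hqnn : ∀ p : ℝ × ℝ, 0 ≤ q p := fun p => q_nonneg hρ0 hρ1 p.1 p.2
  have hup : ∀ p, G p ≤ C * F p := fun p => (G_bounds hb hρ0 hρ1 hε p.1 p.2).2
  have hlo : ∀ p, r * F p ≤ G p := fun p => (G_bounds hb hρ0 hρ1 hε p.1 p.2).1
  have hlogF : ∀ p, Real.log (F p) = Real.log K - q p / (2 * (1 - ρ ^ 2)) :=
    fun p => log_fXY_eq hb hρ0 hρ1 p.1 p.2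
  -- bounds on log G
  have hlogG_up : ∀ p, Real.log (G p) ≤ Real.log C + Real.log (F p) := by
    intro p
    rw [← Real.log_mul hCpos.ne' (hFpos p).ne']
    exact Real.log_le_log (hGpos p) (hup p)
  have hrpos : 0 < r := div_pos heps1 heps2
  have hlogG_lo : ∀ p, -Real.log C + Real.log (F p) ≤ Real.log (G p) := by
    intro p
    rw [← hlogr, ← Real.log_mul hrpos.ne' (hFpos p).ne']
    apply Real.log_le_log (mul_pos hrpos (hFpos p)) (hlo p)
  -- integrability of G log G
  have hmeasG := measurable_G hb hρ0 hρ1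
  have hqmeas : Measurable q := by fun_prop
  have habs_bound : ∀ p, |G p * Real.log (G p)| ≤
      C * (|Real.log K| + Real.log C) * F p + (C / (2 * (1 - ρ ^ 2))) * (F p * q p) := by
    intro p
    rw [abs_mul, abs_of_nonneg (hGpos p).le]
    have h1 : |Real.log (G p)| ≤ Real.log C + |Real.log (F p)| := by
      rw [abs_le]
      constructor
      · have hnal := neg_abs_le (Real.log (F p))
        linarith [hlogG_lo p]
      · linarith [hlogG_up p, le_abs_self (Real.log (F p))]
    have h3 : |Real.log (F p)| ≤ |Real.log K| + q p / (2 * (1 - ρ ^ 2)) := by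
      rw [hlogF p]
      calc |Real.log K - q p / (2 * (1 - ρ ^ 2))| ≤
          |Real.log K| + |q p / (2 * (1 - ρ ^ 2))| := abs_sub _ _
        _ = |Real.log K| + q p / (2 * (1 - ρ ^ 2)) := by
            rw [abs_of_nonneg (div_nonneg (hqnn p) (by positivity))]
    calc G p * |Real.log (G p)| ≤ (C * F p) * (Real.log C + (|Real.log K| + q p / (2 * (1 - ρ ^ 2)))) := by
          apply mul_le_mul (hup p) (h1.trans (by linarith)) (abs_nonneg _)
            (mul_nonneg hCpos.le (hFpos p).le)
      _ = C * (|Real.log K| + Real.log C) * F p + (C / (2 * (1 - ρ ^ 2))) * (F p * q p) := by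
          field_simp
          ring
  have hint_dom : Integrable (fun p : ℝ × ℝ =>
      C * (|Real.log K| + Real.log C) * F p + (C / (2 * (1 - ρ ^ 2))) * (F p * q p)) :=
    ((integrable_fXY2 hρ0 hρ1).const_mul _).add ((integrable_fXYq2 hρ0 hρ1).const_mul _)
  have hint_GlogG : Integrable (fun p : ℝ × ℝ => G p * Real.log (G p)) := by
    apply Integrable.mono' hint_dom
    · exact (hmeasG.mul (hmeasG.log)).aestronglyMeasurable
    · filter_upwards with p
      rw [Real.norm_eq_abs]
      exact habs_bound p
  have hint_G := integrable_G2 hb hρ0 hρ1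
  have hint_Gq := integrable_Gq hb hρ0 hρ1 hε
  -- the comparison integrand and its value
  have hcomp_eq : ∀ p, G p * (Real.log C + Real.log (F p)) =
      (Real.log C + Real.log K) * G p - (1 / (2 * (1 - ρ ^ 2))) * (G p * q p) := by
    intro p
    rw [hlogF p]
    field_simp
    ring
  have hint_comp : Integrable (fun p : ℝ × ℝ =>
      (Real.log C + Real.log K) * G p - (1 / (2 * (1 - ρ ^ 2))) * (G p * q p)) :=
    (hint_G.const_mul _).sub (hint_Gq.const_mul _)
  -- pointwise comparison
  have hpw : ∀ p, G p * Real.log (G p) ≤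
      (Real.log C + Real.log K) * G p - (1 / (2 * (1 - ρ ^ 2))) * (G p * q p) := by
    intro p
    rw [← hcomp_eq p]
    exact mul_le_mul_of_nonneg_left (hlogG_up p) (hGpos p).le
  have hmono := integral_mono hint_GlogG hint_comp hpw
  have hval : ∫ p : ℝ × ℝ, ((Real.log C + Real.log K) * G p -
      (1 / (2 * (1 - ρ ^ 2))) * (G p * q p)) =
      (Real.log C + Real.log K) * 1 - (1 / (2 * (1 - ρ ^ 2))) *
        ∫ p : ℝ × ℝ, G p * q p := by
    rw [integral_sub (hint_G.const_mul _) (hint_Gq.const_mul _), integral_const_mul,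
      integral_const_mul, integral_G2 hb hρ0 hρ1]
  rw [hval] at hmono
  have hGq_ge := integral_Gq_ge hb hρ0 hρ1 hε
  -- numeric facts
  have hlogC_le : Real.log C ≤ 3 * eps := by
    have e1 : Real.log (1 + eps) ≤ eps := by
      have := Real.log_le_sub_one_of_pos heps2
      linarith
    have e2 : Real.log (1 - eps) ≥ -2 * eps := by
      have h3 : Real.log (1 - eps) = -Real.log (1 - eps)⁻¹ := by
        rw [Real.log_inv]; ring
      have h4 : Real.log (1 - eps)⁻¹ ≤ (1 - eps)⁻¹ - 1 := Real.log_le_sub_one_of_pos (by positivity)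
      have h5 : (1 - eps)⁻¹ - 1 = eps / (1 - eps) := by field_simp; ring
      have h6 : eps / (1 - eps) ≤ 2 * eps := by
        rw [div_le_iff₀ heps1]
        nlinarith
      linarith [h3, h4]
    rw [hC, Real.log_div heps2.ne' heps1.ne']
    linarith
  have hr_ge : 1 - 2 * eps ≤ r := by
    rw [hr, le_div_iff₀ heps2]
    nlinarith
  have hfrac : (1 / (2 * (1 - ρ ^ 2))) * (r * (2 * (1 - ρ ^ 2))) = r := by
    field_simp
  have hstep : (1 / (2 * (1 - ρ ^ 2))) * (r * (2 * (1 - ρ ^ 2))) ≤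
      (1 / (2 * (1 - ρ ^ 2))) * ∫ p : ℝ × ℝ, G p * q p := by
    apply mul_le_mul_of_nonneg_left _ (by positivity)
    exact hGq_ge
  rw [hfrac] at hstep
  have hfinal : ∫ p : ℝ × ℝ, G p * Real.log (G p) ≤
      Real.log C + Real.log K - r := by
    calc ∫ p : ℝ × ℝ, G p * Real.log (G p)
        ≤ (Real.log C + Real.log K) * 1 - (1 / (2 * (1 - ρ ^ 2))) *
            ∫ p : ℝ × ℝ, G p * q p := hmono
      _ ≤ (Real.log C + Real.log K) * 1 - r := by linarith
      _ = Real.log C + Real.log K - r := by ring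
  have : ∫ p : ℝ × ℝ, fXbarYbar ρ b p.1 p.2 * Real.log (fXbarYbar ρ b p.1 p.2) =
      ∫ p : ℝ × ℝ, G p * Real.log (G p) := rfl
  rw [ge_iff_le, this]
  rw [hlogK] at hfinal
  linarith

end final

end helpers

/-- Lemma 1, second part: if `ε = ε_Λ(√(ρ(1-ρ)/(1+ρ))) < 1/2` and the second
moment of `D_{Λ,√ρ}` is at least `ρ(1-2ε)`, then the differential entropy of the mixture
density is at least `ln(2π√(1-ρ²)) + 1 − 5ε`; equivalently, the entropy gap
`h(f_{X,Y}) − h(f_{X̄,Ȳ}) = I(X,Y;W) − I(X̄,Ȳ;W̄)` is at most `5ε` nats. -/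
theorem mixture_entropy_lower_bound (ρ b : ℝ) (hb : 0 < b) (hρ0 : 0 < ρ) (hρ1 : ρ < 1)
    (hε : flatness b (Real.sqrt (ρ * (1 - ρ) / (1 + ρ))) < 1 / 2)
    (hm₂ : (∑' k : ℤ, dgauss b (Real.sqrt ρ) k * (b * k) ^ 2) ≥
      ρ * (1 - 2 * flatness b (Real.sqrt (ρ * (1 - ρ) / (1 + ρ))))) :
    -∫ p : ℝ × ℝ, fXbarYbar ρ b p.1 p.2 * Real.log (fXbarYbar ρ b p.1 p.2) ≥
      Real.log (2 * Real.pi * Real.sqrt (1 - ρ ^ 2)) + 1 -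
        5 * flatness b (Real.sqrt (ρ * (1 - ρ) / (1 + ρ))) := by
  exact main_bound hb hρ0 hρ1 hε
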